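/- Let K be a compact Hausdorff space. Then sbiort_1(C(K)) = hL(K): the supremum of cardinalities of semibiorthogonal sequences (f_i, μ_i) in C(K) × M(K) in which every μ_i is 1-supported equals the hereditary Lindelöf degree of K. Consequently hL(K) ≤ sbiort(C(K)). -/

import Mathlib

open Cardinal Set Topology

universe u

noncomputable section

/-- The spread of a topological space: the supremum of cardinalities of discrete subspaces. -/
def spread (Z : Type u) [TopologicalSpace Z] : Cardinal.{u} :=
  ⨆ D : {D : Set Z // DiscreteTopology D}, #D.1

/-- The density of a topological space: the least cardinality of a dense subset. -/
def densityCard (Z : Type u) [TopologicalSpace Z] : Cardinal.{u} :=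
  ⨅ D : {D : Set Z // Dense D}, #D.1

/-- The hereditary density: the supremum of the densities of all subspaces. -/
def hdens (Z : Type u) [TopologicalSpace Z] : Cardinal.{u} :=
  ⨆ S : Set Z, densityCard S

/-- The Lindelöf degree: the least cardinal κ such that every open cover
has a subcover of cardinality at most κ. -/
def lindelofDeg (Z : Type u) [TopologicalSpace Z] : Cardinal.{u} :=
  sInf {κ | ∀ (ι : Type u) (U : ι → Set Z), (∀ i, IsOpen (U i)) → (⋃ i, U i) = Set.univ →
    ∃ t : Set ι, #t ≤ κ ∧ (⋃ i ∈ t, U i) = Set.univ}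

/-- The hereditary Lindelöf degree: the supremum of the Lindelöf degrees of all subspaces. -/
def hLindelof (Z : Type u) [TopologicalSpace Z] : Cardinal.{u} :=
  ⨆ S : Set Z, lindelofDeg S

/-- An `n`-supported functional on `C(K, ℝ)`: a linear combination of `n` point
evaluations (Dirac measures). -/
def NSupported (K : Type u) [TopologicalSpace K] [CompactSpace K] (n : ℕ)
    (μ : C(K, ℝ) →L[ℝ] ℝ) : Prop :=
  ∃ (x : Fin n → K) (a : Fin n → ℝ), μ = ∑ i, a i • ContinuousMap.evalCLM ℝ (x i)

/-- A semibiorthogonal sequence (indexed by a linearly ordered type, in applications the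
set of ordinals below a given ordinal): `f_i (x_i) = 1`, `f_i (x_j) = 0` for `j < i`, and
`f_i (x_j) ≥ 0` for `i < j`. -/
def IsSemiBiorthSeq {X : Type u} [NormedAddCommGroup X] [NormedSpace ℝ X]
    {I : Type u} [LinearOrder I] (x : I → X) (f : I → (X →L[ℝ] ℝ)) : Prop :=
  (∀ i, f i (x i) = 1) ∧ (∀ i j, j < i → f i (x j) = 0) ∧ (∀ i j, i < j → 0 ≤ f i (x j))

/-- `sbiort X`: the supremum of the cardinalities of the lengths of semibiorthogonal
sequences in `X × X*`. -/
def sbiort (X : Type u) [NormedAddCommGroup X] [NormedSpace ℝ X] : Cardinal.{u} :=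
  sSup {c | ∃ (o : Ordinal.{u}) (x : o.ToType → X) (f : o.ToType → (X →L[ℝ] ℝ)),
    IsSemiBiorthSeq x f ∧ c = #o.ToType}

/-- `sbiortN K n`: the supremum of the cardinalities of the lengths of semibiorthogonal
sequences in `C(K) × M(K)` all of whose functionals are `n`-supported. -/
def sbiortN (K : Type u) [TopologicalSpace K] [CompactSpace K] (n : ℕ) : Cardinal.{u} :=
  sSup {c | ∃ (o : Ordinal.{u}) (f : o.ToType → C(K, ℝ)) (μ : o.ToType → (C(K, ℝ) →L[ℝ] ℝ)),
    IsSemiBiorthSeq f μ ∧ (∀ i, NSupported K n (μ i)) ∧ c = #o.ToType}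

namespace Stmt18Aux


def RightSep {K : Type u} [TopologicalSpace K] {I : Type u} [LinearOrder I] (x : I → K) : Prop :=
  ∀ i, ∃ U : Set K, IsOpen U ∧ x i ∈ U ∧ ∀ j, i < j → x j ∉ U


theorem RightSep.injective {K : Type u} [TopologicalSpace K] {I : Type u} [LinearOrder I]
    {x : I → K} (h : RightSep x) : Function.Injective x := by
  intro i j hij
  by_contra hne
  rcases lt_or_gt_of_ne hne with h' | h'
  · obtain ⟨U, _, hmem, hout⟩ := h i
    exact hout j h' (hij ▸ hmem)
  · obtain ⟨U, _, hmem, hout⟩ := h j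
    exact hout i h' (hij.symm ▸ hmem)

/-- The set of cardinalities of right-separated transfinite sequences. -/

def rsepSet (K : Type u) [TopologicalSpace K] : Set Cardinal.{u} :=
  {c | ∃ (o : Ordinal.{u}) (x : o.ToType → K), RightSep x ∧ c = #o.ToType}


theorem zero_mem_rsepSet (K : Type u) [TopologicalSpace K] : 0 ∈ rsepSet K :=
  ⟨0, fun i => isEmptyElim i, fun i => isEmptyElim i, (Cardinal.mk_eq_zero _).symm⟩


theorem rsepSet_bddAbove (K : Type u) [TopologicalSpace K] : BddAbove (rsepSet K) := by
  refine ⟨#K, ?_⟩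
  rintro c ⟨o, x, hx, rfl⟩
  exact Cardinal.mk_le_of_injective hx.injective


theorem mk_mem_lindelofSet (Z : Type u) [TopologicalSpace Z] :
    Cardinal.mk Z ∈ {κ : Cardinal.{u} | ∀ (ι : Type u) (U : ι → Set Z), (∀ i, IsOpen (U i)) →
      (⋃ i, U i) = Set.univ → ∃ t : Set ι, #t ≤ κ ∧ (⋃ i ∈ t, U i) = Set.univ} := by
  intro ι U _ hcov
  have hchoice : ∀ z : Z, ∃ i, z ∈ U i := fun z => Set.mem_iUnion.mp (hcov ▸ Set.mem_univ z)
  choose φ hφ using hchoice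
  refine ⟨Set.range φ, Cardinal.mk_range_le, ?_⟩
  apply Set.eq_univ_of_forall
  intro z
  exact Set.mem_biUnion ⟨z, rfl⟩ (hφ z)


theorem lindelofDeg_le_mk (Z : Type u) [TopologicalSpace Z] : lindelofDeg Z ≤ #Z :=
  csInf_le (OrderBot.bddBelow _) (mk_mem_lindelofSet Z)


theorem bddAbove_lindelof (K : Type u) [TopologicalSpace K] :
    BddAbove (Set.range fun S : Set K => lindelofDeg S) := by
  refine ⟨#K, ?_⟩
  rintro _ ⟨S, rfl⟩
  exact (lindelofDeg_le_mk S).trans (Cardinal.mk_set_le S)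


theorem lindelofDeg_le_hLindelof {K : Type u} [TopologicalSpace K] (S : Set K) :
    lindelofDeg S ≤ hLindelof K :=
  le_ciSup (bddAbove_lindelof K) S


theorem exists_pts {σ : Type u} {ι : Type u} (U : ι → Set σ)
    (hcov : (⋃ i, U i) = Set.univ) {κ : Cardinal.{u}}
    (hno : ∀ t : Set ι, #t ≤ κ → (⋃ i ∈ t, U i) ≠ Set.univ) :
    ∃ g : (Order.succ κ).ord.ToType → σ × ι,
      (∀ β, (g β).1 ∈ U ((g β).2)) ∧ ∀ γ β, γ < β → (g β).1 ∉ U ((g γ).2) := by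
  have hcard : ∀ β : (Order.succ κ).ord.ToType, #{γ : (Order.succ κ).ord.ToType // γ < β} ≤ κ := by
    intro β
    have h1 := @Ordinal.card_typein (Order.succ κ).ord.ToType (· < ·) isWellOrder_lt β
    have h2 := Ordinal.typein_lt_self β
    rw [← h1]
    exact Order.lt_succ_iff.mp (Cardinal.lt_ord.mp h2)
  have key : ∀ (β : (Order.succ κ).ord.ToType) (prev : ∀ γ : (Order.succ κ).ord.ToType, γ < β → σ × ι),
      ∃ p : σ × ι, p.1 ∈ U p.2 ∧ ∀ γ (h : γ < β), p.1 ∉ U ((prev γ h).2) := by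
    intro β prev
    set t : Set ι := {i | ∃ γ : (Order.succ κ).ord.ToType, ∃ h : γ < β, (prev γ h).2 = i} with ht
    have htle : #t ≤ κ := by
      refine le_trans ?_ (hcard β)
      have hsurj : Function.Surjective
          (fun γ : {γ : (Order.succ κ).ord.ToType // γ < β} => (⟨(prev γ.1 γ.2).2, ⟨γ.1, γ.2, rfl⟩⟩ : t)) := by
        rintro ⟨i, γ, h, rfl⟩
        exact ⟨⟨γ, h⟩, rfl⟩
      exact Cardinal.mk_le_of_surjective hsurj
    obtain ⟨s, hs⟩ := (Set.ne_univ_iff_exists_notMem _).mp (hno t htle)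
    obtain ⟨i, hi⟩ : ∃ i, s ∈ U i := Set.mem_iUnion.mp (hcov ▸ Set.mem_univ s)
    refine ⟨(s, i), hi, fun γ h hmem => hs ?_⟩
    exact Set.mem_biUnion ⟨γ, h, rfl⟩ hmem
  let g : (Order.succ κ).ord.ToType → σ × ι := WellFounded.fix (IsWellFounded.wf (r := ((· < ·) : (Order.succ κ).ord.ToType → (Order.succ κ).ord.ToType → Prop)))
      (fun β ih => (key β ih).choose)
  have hg : ∀ β, g β = (key β (fun γ _ => g γ)).choose := fun β =>
    WellFounded.fix_eq _ _ β
  refine ⟨g, fun β => ?_, fun γ β h => ?_⟩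
  · have hspec := (key β (fun γ _ => g γ)).choose_spec
    rw [hg β]
    exact hspec.1
  · have hspec := (key β (fun γ _ => g γ)).choose_spec
    rw [hg β]
    exact hspec.2 γ h


theorem hLindelof_le_rsep (K : Type u) [TopologicalSpace K] :
    hLindelof K ≤ sSup (rsepSet K) := by
  apply ciSup_le
  intro S
  by_contra hlt
  push_neg at hlt
  set κ := sSup (rsepSet K) with hκ
  have hnot : κ ∉ {κ' : Cardinal.{u} | ∀ (ι : Type u) (U : ι → Set ↥S), (∀ i, IsOpen (U i)) →
      (⋃ i, U i) = Set.univ → ∃ t : Set ι, #t ≤ κ' ∧ (⋃ i ∈ t, U i) = Set.univ} := by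
    intro hmem
    exact absurd (csInf_le (OrderBot.bddBelow _) hmem) (not_le.mpr hlt)
  simp only [Set.mem_setOf_eq] at hnot
  push_neg at hnot
  obtain ⟨ι, U, hop, hcov, hno⟩ := hnot
  obtain ⟨g, hg1, hg2⟩ := exists_pts U hcov (fun t ht => hno t ht)
  -- transfer the right-separated sequence from the subspace to K
  have hW : RightSep (fun β : (Order.succ κ).ord.ToType => ((g β).1 : K)) := by
    intro β
    obtain ⟨V, hVopen, hUV⟩ := isOpen_induced_iff.mp (hop ((g β).2))
    refine ⟨V, hVopen, ?_, fun γ hγ hmem => ?_⟩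
    · have := hg1 β
      rw [← hUV] at this
      exact this
    · have h2 := hg2 β γ hγ
      rw [← hUV] at h2
      exact h2 hmem
  have hmem : #((Order.succ κ).ord.ToType) ∈ rsepSet K := ⟨_, _, hW, rfl⟩
  have hle := le_csSup (rsepSet_bddAbove K) hmem
  rw [Cardinal.mk_toType, Cardinal.card_ord] at hle
  exact absurd hle (not_le.mpr (Order.lt_succ κ))

theorem rsep_le_hLindelof (K : Type u) [TopologicalSpace K] [T2Space K] :
    sSup (rsepSet K) ≤ hLindelof K := by
  apply csSup_le ⟨0, zero_mem_rsepSet K⟩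
  rintro c ⟨o, x, hx, rfl⟩
  have H : ∀ κ : Cardinal.{u}, κ ≤ #o.ToType → (κ < ℵ₀ ∨ κ.IsRegular) → κ ≤ hLindelof K := by
    intro κ hκ hreg
    have hord : κ.ord ≤ o := by
      have h1 : κ ≤ o.card := by rwa [Cardinal.mk_toType] at hκ
      exact le_trans (Cardinal.ord_le_ord.mpr h1) (Cardinal.ord_card_le o)
    let e := Ordinal.initialSegToType hord
    set y : κ.ord.ToType → K := fun i => x (e i) with hy
    have hys : RightSep y := by
      intro i
      obtain ⟨U, hU, hmem, hout⟩ := hx (e i)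
      exact ⟨U, hU, hmem, fun j hj => hout (e j) (e.strictMono hj)⟩
    have hyinj : Function.Injective y := hys.injective
    have hcard : #(↥(Set.range y)) = κ := by
      rw [Cardinal.mk_range_eq _ hyinj, Cardinal.mk_toType, Cardinal.card_ord]
    refine le_trans ?_ (lindelofDeg_le_hLindelof (Set.range y))
    apply le_csInf ⟨#(↥(Set.range y)), mk_mem_lindelofSet _⟩
    intro κ' hκ'
    rcases hreg with hfin | hreg
    · -- finite case: the range is finite and discrete, cover by singletons
      have hfinS : Finite ↥(Set.range y) := by
        rw [← Cardinal.mk_lt_aleph0_iff, hcard]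
        exact hfin
      obtain ⟨t, htcard, htcov⟩ := hκ' (↥(Set.range y)) (fun s => {s})
        (fun s => isOpen_discrete _) (by simp [Set.iUnion_of_singleton])
      have htuniv : t = Set.univ := by
        apply Set.eq_univ_of_forall
        intro s
        have : s ∈ ⋃ s' ∈ t, ({s'} : Set ↥(Set.range y)) := htcov ▸ Set.mem_univ s
        simpa using this
      rw [htuniv] at htcard
      rw [← hcard]
      simpa using htcard
    · -- regular case: cover by the separating neighborhoods, use cofinality
      choose V hVopen hVmem hVout using hys
      obtain ⟨t, htcard, htcov⟩ := hκ' κ.ord.ToType (fun i => Subtype.val ⁻¹' V i)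
        (fun i => (hVopen i).preimage continuous_subtype_val)
        (by
          apply Set.eq_univ_of_forall
          rintro ⟨z, hz⟩
          obtain ⟨i, rfl⟩ := hz
          exact Set.mem_iUnion.mpr ⟨i, hVmem i⟩)
      have hunb : Set.Unbounded (· < ·) t := by
        intro i
        have hmem : (⟨y i, Set.mem_range_self i⟩ : ↥(Set.range y)) ∈
            ⋃ j ∈ t, Subtype.val ⁻¹' V j := htcov ▸ Set.mem_univ _
        obtain ⟨j, hj, hmemj⟩ := Set.mem_iUnion₂.mp hmem
        exact ⟨j, hj, fun hlt => hVout j i hlt hmemj⟩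
      have h1 := Order.cof_le (s := t) (fun i => (hunb i).imp fun j hj => ⟨hj.1, not_lt.mp hj.2⟩)
      rw [Ordinal.cof_toType, hreg.cof_ord] at h1
      exact h1.trans htcard
  rcases lt_or_ge #o.ToType ℵ₀ with hc | hc
  · exact H _ le_rfl (Or.inl hc)
  · apply le_of_forall_lt
    intro a ha
    rcases lt_or_ge a ℵ₀ with haf | hai
    · exact haf.trans_le (H ℵ₀ hc (Or.inr Cardinal.isRegular_aleph0))
    · exact (Order.lt_succ a).trans_le
        (H _ (Order.succ_le_of_lt ha) (Or.inr (Cardinal.isRegular_succ hai)))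



theorem evalCLM_apply {K : Type u} [TopologicalSpace K] [CompactSpace K] (x : K) (f : C(K, ℝ)) :
    ContinuousMap.evalCLM ℝ x f = f x := rfl

theorem sbiortN_set_eq (K : Type u) [TopologicalSpace K] [CompactSpace K] [T2Space K] :
    {c | ∃ (o : Ordinal.{u}) (f : o.ToType → C(K, ℝ)) (μ : o.ToType → (C(K, ℝ) →L[ℝ] ℝ)),
      IsSemiBiorthSeq f μ ∧ (∀ i, NSupported K 1 (μ i)) ∧ c = #o.ToType} = rsepSet K := by
  apply Set.eq_of_subset_of_subset
  · rintro c ⟨o, f, μ, ⟨h1, h2, _⟩, hsup, rfl⟩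
    choose xs as hμ using hsup
    set p : o.ToType → K := fun i => xs i 0 with hp
    set a : o.ToType → ℝ := fun i => as i 0 with ha
    have happ : ∀ i (g : C(K, ℝ)), μ i g = a i * g (p i) := by
      intro i g
      rw [hμ i]
      simp [Fin.sum_univ_one, evalCLM_apply]
      rfl
    have hane : ∀ i, a i ≠ 0 := by
      intro i hzero
      have := h1 i
      rw [happ, hzero, zero_mul] at this
      exact zero_ne_one this
    refine ⟨o, p, ?_, rfl⟩
    intro i
    refine ⟨(f i) ⁻¹' ({(0 : ℝ)}ᶜ), (isOpen_compl_singleton).preimage (f i).continuous, ?_, ?_⟩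
    · intro hmem
      have := h1 i
      rw [happ] at this
      simp only [Set.mem_preimage, Set.mem_compl_iff, Set.mem_singleton_iff, not_not] at hmem
      rw [hmem, mul_zero] at this
      exact zero_ne_one this
    · intro j hij hmem
      have := h2 j i hij
      rw [happ] at this
      simp only [Set.mem_preimage, Set.mem_compl_iff, Set.mem_singleton_iff] at hmem
      exact hmem (by
        rcases mul_eq_zero.mp this with h | h
        · exact absurd h (hane j)
        · exact h)
  · rintro c ⟨o, x, hx, rfl⟩
    choose V hVo hVmem hVout using hx
    have hf : ∀ i : o.ToType, ∃ f : C(K, ℝ), Set.EqOn f 0 (V i)ᶜ ∧ Set.EqOn f 1 {x i} ∧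
        ∀ z, f z ∈ Set.Icc (0 : ℝ) 1 := by
      intro i
      apply exists_continuous_zero_one_of_isClosed (isClosed_compl_iff.mpr (hVo i))
        isClosed_singleton
      rw [Set.disjoint_left]
      rintro z hz hz'
      rw [Set.mem_singleton_iff] at hz'
      exact hz (hz' ▸ hVmem i)
    choose f hf0 hf1 hficc using hf
    refine ⟨o, f, fun i => ContinuousMap.evalCLM ℝ (x i), ⟨?_, ?_, ?_⟩, ?_, rfl⟩
    · intro i
      rw [evalCLM_apply]
      exact hf1 i (Set.mem_singleton _)
    · intro i j hji
      rw [evalCLM_apply]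
      exact hf0 j (hVout j i hji)
    · intro i j hij
      rw [evalCLM_apply]
      exact (hficc j (x i)).1
    · intro i
      exact ⟨fun _ => x i, fun _ => 1, by rw [Fin.sum_univ_one, one_smul]⟩


theorem sbiort_bddAbove (X : Type u) [NormedAddCommGroup X] [NormedSpace ℝ X] :
    BddAbove {c | ∃ (o : Ordinal.{u}) (x : o.ToType → X) (f : o.ToType → (X →L[ℝ] ℝ)),
      IsSemiBiorthSeq x f ∧ c = #o.ToType} := by
  refine ⟨#X, ?_⟩
  rintro c ⟨o, x, f, ⟨h1, h2, _⟩, rfl⟩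
  apply Cardinal.mk_le_of_injective (f := x)
  intro i j hij
  by_contra hne
  rcases lt_or_gt_of_ne hne with h | h
  · have e1 := h1 j
    have e2 := h2 j i h
    rw [hij] at e2
    rw [e2] at e1
    exact zero_ne_one e1
  · have e1 := h1 i
    have e2 := h2 i j h
    rw [← hij] at e2
    rw [e2] at e1
    exact zero_ne_one e1

end Stmt18Aux

/-- For a compact Hausdorff space `K`, `sbiort₁(C(K)) = hL(K)`;
consequently `hL(K) ≤ sbiort(C(K))`. -/
theorem stmt18 (K : Type u) [TopologicalSpace K] [CompactSpace K] [T2Space K] :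
    sbiortN K 1 = hLindelof K ∧ hLindelof K ≤ sbiort C(K, ℝ) := by
  have heq : sbiortN K 1 = sSup (Stmt18Aux.rsepSet K) := by
    rw [sbiortN, Stmt18Aux.sbiortN_set_eq]
  have h1 : sbiortN K 1 = hLindelof K :=
    heq.trans (le_antisymm (Stmt18Aux.rsep_le_hLindelof K) (Stmt18Aux.hLindelof_le_rsep K))
  refine ⟨h1, ?_⟩
  rw [← h1, heq]
  apply csSup_le ⟨0, Stmt18Aux.zero_mem_rsepSet K⟩
  intro c hc
  rw [← Stmt18Aux.sbiortN_set_eq K] at hc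
  obtain ⟨o, f, μ, hsb, _, rfl⟩ := hc
  exact le_csSup (Stmt18Aux.sbiort_bddAbove _) ⟨o, f, μ, hsb, rfl⟩


end
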